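/- Let P be a finite p-group of class 2 and exponent p. If 𝓗 is a central decomposition of P, then the set {HP'/P' : H ∈ 𝓗} is an orthogonal decomposition of the commutator bilinear map b : P/P' × P/P' → P' defined by b(xP', yP') = [x,y]. -/

import Mathlib

/-- A central decomposition of a group `G`: a set of subgroups whose distinct members
commute elementwise, which generates `G`, but no proper subset of which generates `G`. -/
def IsCentralDecomp (G : Type*) [Group G] (𝓗 : Set (Subgroup G)) : Prop :=
  (∀ H ∈ 𝓗, ∀ K ∈ 𝓗, H ≠ K → ∀ x ∈ H, ∀ y ∈ K, Commute x y) ∧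
  sSup 𝓗 = ⊤ ∧
  ∀ 𝓙 ⊆ 𝓗, sSup 𝓙 = ⊤ → 𝓙 = 𝓗

open scoped commutatorElement

private lemma comm_left_aux {G : Type*} [Group G] {c : G}
    (hc : ∀ g : G, g * c = c * g) (a b : G) : ⁅a * c, b⁆ = ⁅a, b⁆ := by
  have h : ⁅a * c, b⁆ = a * (c * b) * (c⁻¹ * a⁻¹) * b⁻¹ := by group
  rw [h, ← hc b]; group

private lemma comm_central_aux {G : Type*} [Group G] {c d : G}
    (hc : c ∈ Subgroup.center G) (hd : d ∈ Subgroup.center G) (a b : G) :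
    ⁅a * c, b * d⁆ = ⁅a, b⁆ := by
  rw [Subgroup.mem_center_iff] at hc hd
  rw [comm_left_aux hc, ← commutatorElement_inv, comm_left_aux hd,
    commutatorElement_inv]

/-- If `H ⊔ commutator P = ⊤` and `commutator P ≤ center P`, then `H = ⊤`. -/
private lemma sup_commutator_eq_top {P : Type*} [Group P]
    (hclass : commutator P ≤ Subgroup.center P) {H : Subgroup P}
    (h : H ⊔ commutator P = ⊤) : H = ⊤ := by
  have hC : commutator P ≤ H := by
    rw [commutator, Subgroup.commutator_le]
    intro g₁ _ g₂ _
    have decomp : ∀ g : P, ∃ a ∈ H, ∃ c ∈ commutator P, g = a * c := by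
      intro g
      have hg : g ∈ (↑(H ⊔ commutator P) : Set P) := h ▸ Subgroup.mem_top g
      rw [Subgroup.mul_normal H (commutator P)] at hg
      obtain ⟨a, ha, c, hc, rfl⟩ := hg
      exact ⟨a, ha, c, hc, rfl⟩
    obtain ⟨a₁, ha₁, c₁, hc₁, rfl⟩ := decomp g₁
    obtain ⟨a₂, ha₂, c₂, hc₂, rfl⟩ := decomp g₂
    rw [comm_central_aux (hclass hc₁) (hclass hc₂)]
    rw [commutatorElement_def]
    exact H.mul_mem (H.mul_mem (H.mul_mem ha₁ ha₂) (H.inv_mem ha₁)) (H.inv_mem ha₂)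
  rw [← h, sup_eq_left.mpr hC]

/-- If `𝓗` is a central decomposition of a `p`-group `P` of class 2 and exponent `p`,
then `{HP'/P' : H ∈ 𝓗}` is an orthogonal decomposition of the commutator bilinear map
`b : P/P' × P/P' → P'`, `b(xP', yP') = [x,y]`. -/
theorem stmt_3 {P : Type*} [Group P] [Finite P] {p : ℕ} (hp : p.Prime) (hodd : Odd p)
    (hexp : ∀ x : P, x ^ p = 1) (hclass : commutator P ≤ Subgroup.center P)
    (𝓗 : Set (Subgroup P)) (hcd : IsCentralDecomp P 𝓗)
    (b : (P ⧸ commutator P) → (P ⧸ commutator P) → (commutator P))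
    (hb : ∀ x y : P,
      (b (QuotientGroup.mk x) (QuotientGroup.mk y) : P) = ⁅x, y⁆)
    (𝓧 : Set (Subgroup (P ⧸ commutator P)))
    (h𝓧 : 𝓧 = (fun H : Subgroup P => H.map (QuotientGroup.mk' (commutator P))) '' 𝓗) :
    (∀ X ∈ 𝓧, ∀ Y ∈ 𝓧, X ≠ Y → ∀ x ∈ X, ∀ y ∈ Y, b x y = 1) ∧
    sSup 𝓧 = ⊤ ∧
    (∀ 𝓨 ⊆ 𝓧, sSup 𝓨 = ⊤ → 𝓨 = 𝓧) := by
  obtain ⟨hcomm, hgen, hmin⟩ := hcd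
  set f := QuotientGroup.mk' (commutator P) with hf
  have hsurj : Function.Surjective f := QuotientGroup.mk'_surjective _
  have hker : f.ker = commutator P := QuotientGroup.ker_mk' _
  have hmap_sSup : ∀ S : Set (Subgroup P),
      sSup ((fun H : Subgroup P => H.map f) '' S) = (sSup S).map f := by
    intro S
    rw [(Subgroup.gc_map_comap f).l_sSup (s := S), sSup_image]
  have htop_iff : ∀ H : Subgroup P, H.map f = ⊤ ↔ H ⊔ commutator P = ⊤ := by
    intro H
    constructor
    · intro h
      have h2 := congrArg (Subgroup.comap f) h
      rwa [Subgroup.comap_map_eq, hker, Subgroup.comap_top] at h2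
    · intro h
      have h2 : Subgroup.map f (H ⊔ commutator P) = ⊤ := by
        rw [h]; exact Subgroup.map_top_of_surjective f hsurj
      rwa [Subgroup.map_sup,
        (Subgroup.map_eq_bot_iff (commutator P)).mpr hker.ge, sup_bot_eq] at h2
  refine ⟨?_, ?_, ?_⟩
  · rw [h𝓧]
    rintro X ⟨H, hH, rfl⟩ Y ⟨K, hK, rfl⟩ hne x hx y hy
    obtain ⟨h, hhH, rfl⟩ := hx
    obtain ⟨k, hkK, rfl⟩ := hy
    have hHK : H ≠ K := by rintro rfl; exact hne rfl
    have hcm : Commute h k := hcomm H hH K hK hHK h hhH k hkK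
    have : (b (f h) (f k) : P) = 1 := by
      have := hb h k
      rw [hcm.commutator_eq] at this; exact this
    exact Subtype.ext this
  · rw [h𝓧, hmap_sSup, hgen]
    exact Subgroup.map_top_of_surjective f hsurj
  · intro 𝓨 h𝓨 htop
    set 𝓙 : Set (Subgroup P) := {H ∈ 𝓗 | H.map f ∈ 𝓨} with h𝓙
    have him : (fun H : Subgroup P => H.map f) '' 𝓙 = 𝓨 := by
      apply Set.Subset.antisymm
      · rintro X ⟨H, ⟨_, hH2⟩, rfl⟩; exact hH2
      · intro X hX
        obtain ⟨H, hH, rfl⟩ := by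
          have := h𝓨 hX; rw [h𝓧] at this; exact this
        exact ⟨H, ⟨hH, hX⟩, rfl⟩
    have hJtop : sSup 𝓙 = ⊤ := by
      apply sup_commutator_eq_top hclass
      rw [← htop_iff]
      rw [← hmap_sSup, him, htop]
    have : 𝓙 = 𝓗 := hmin 𝓙 (fun H hH => hH.1) hJtop
    rw [← him, this, ← h𝓧]
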